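/- The poset S_nc-sd(1,2) is not a lattice: the two elements of S_ann-nc(1,2) with underlying permutations (1,2)(3) and (1,3)(2) are each below both (1,2,3) and (1,3,2), which are distinct minimal upper bounds; hence the pair {(1,2)(3), (1,3)(2)} has no least upper bound in S_nc-sd(1,2). -/
import Mathlib


namespace AnnNC

/-- The orbit ("same cycle") setoid of a permutation. -/
def orbitSetoid {α : Type*} (σ : Equiv.Perm α) : Setoid α :=
  ⟨σ.SameCycle, ⟨fun x => Equiv.Perm.SameCycle.refl σ x,
    fun h => h.symm, fun h h' => h.trans h'⟩⟩

/-- Number of orbits (cycles, counting fixed points) of a permutation. -/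
noncomputable def numOrbits {α : Type*} (σ : Equiv.Perm α) : ℕ :=
  Nat.card (Quotient (orbitSetoid σ))

/-- Number of blocks of the join `Π(σ) ∨ Π(ρ)` of the orbit partitions. -/
noncomputable def numJoin {α : Type*} (σ ρ : Equiv.Perm α) : ℕ :=
  Nat.card (Quotient (orbitSetoid σ ⊔ orbitSetoid ρ))

/-- Euler characteristic `χ_ρ(π) = #(ρ) + #(π) + #(π⁻¹ρ) − n`. -/
noncomputable def euler {α : Type*} (ρ π : Equiv.Perm α) : ℤ :=
  (numOrbits ρ : ℤ) + (numOrbits π : ℤ) + (numOrbits (π⁻¹ * ρ) : ℤ) - (Nat.card α : ℤ)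

/-- `π` is noncrossing on `ρ`. -/
def IsNoncrossingOn {α : Type*} (π ρ : Equiv.Perm α) : Prop :=
  euler ρ π = 2 * (numJoin π ρ : ℤ)

/-- Euler characteristic of permutations regarded as permutations of a subset `S`
(for permutations fixing the complement of `S` pointwise). -/
noncomputable def eulerOn {α : Type*} (S : Set α) (ρ π : Equiv.Perm α) : ℤ :=
  ((numOrbits ρ : ℤ) - (Nat.card (Sᶜ : Set α) : ℤ)) +
    ((numOrbits π : ℤ) - (Nat.card (Sᶜ : Set α) : ℤ)) +
    ((numOrbits (π⁻¹ * ρ) : ℤ) - (Nat.card (Sᶜ : Set α) : ℤ)) - (Nat.card (S : Set α) : ℤ)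

/-- `π` is noncrossing on `ρ`, both regarded as permutations of the subset `S`. -/
def IsNoncrossingWithin {α : Type*} (S : Set α) (π ρ : Equiv.Perm α) : Prop :=
  eulerOn S ρ π = 2 * ((numJoin π ρ : ℤ) - (Nat.card (Sᶜ : Set α) : ℤ))

/-- `τ_{p,q} = (1,…,p)(p+1,…,p+q)` as a permutation of `Fin (p+q)`. -/
def tauPQ (p q : ℕ) : Equiv.Perm (Fin (p + q)) :=
  Equiv.permCongr finSumFinEquiv (Equiv.sumCongr (finRotate p) (finRotate q))

/-- Disc-noncrossing permutations: noncrossing on `τ_{p,q}` and the orbit partition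
refines that of `τ_{p,q}`. -/
def SDiscNC (p q : ℕ) : Set (Equiv.Perm (Fin (p + q))) :=
  {π | IsNoncrossingOn π (tauPQ p q) ∧
    ∀ x y : Fin (p + q), π.SameCycle x y → ((x : ℕ) < p ↔ (y : ℕ) < p)}

/-- Annular-noncrossing permutations: noncrossing on `τ_{p,q}` with at least one bridge. -/
def SAnnNC (p q : ℕ) : Set (Equiv.Perm (Fin (p + q))) :=
  {π | IsNoncrossingOn π (tauPQ p q) ∧
    ∃ a b : Fin (p + q), π.SameCycle a b ∧ (a : ℕ) < p ∧ p ≤ (b : ℕ)}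

/-- The set of elements lying in bridges of `σ`. -/
def BridgeSet (p q : ℕ) (σ : Equiv.Perm (Fin (p + q))) : Set (Fin (p + q)) :=
  {x | ∃ a b : Fin (p + q), σ.SameCycle x a ∧ σ.SameCycle x b ∧ (a : ℕ) < p ∧ p ≤ (b : ℕ)}

/-- `π₀` is the permutation induced by `π` on the partition `Π(τ_{p,q})`
(the first–return map of `π` to each of the two sides). -/
def IsPiZero (p q : ℕ) (π π₀ : Equiv.Perm (Fin (p + q))) : Prop :=
  ∀ a : Fin (p + q), ∃ k : ℕ, 0 < k ∧ π₀ a = (π ^ k) a ∧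
    (((a : ℕ) < p) ↔ (((π ^ k) a : ℕ) < p)) ∧
    ∀ j : ℕ, 0 < j → j < k → ¬ (((a : ℕ) < p) ↔ (((π ^ j) a : ℕ) < p))

/-- The order `π ⪯ ρ` for (unhatted) permutations: the orbit partition of `π` refines
that of `ρ` and `π` is noncrossing on `ρ`. -/
def permLe {α : Type*} (π ρ : Equiv.Perm α) : Prop :=
  (∀ x y : α, π.SameCycle x y → ρ.SameCycle x y) ∧ IsNoncrossingOn π ρ

/-- The order relation `π ⪯ ρ̂` in `S_nc-sd(p,q)`, i.e. `Kr(ρ) ⪯ Kr(π)`. -/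
def leAnnHat (p q : ℕ) (π ρ : Equiv.Perm (Fin (p + q))) : Prop :=
  permLe (ρ⁻¹ * tauPQ p q) (π⁻¹ * tauPQ p q)

/-- `σ` is the permutation induced by `π` on the subset `J` (first-return map),
extended by the identity off `J`. -/
def IsInducedOn {α : Type*} (π σ : Equiv.Perm α) (J : Set α) : Prop :=
  (∀ a ∉ J, σ a = a) ∧
  ∀ a ∈ J, ∃ k : ℕ, 0 < k ∧ σ a = (π ^ k) a ∧ (π ^ k) a ∈ J ∧
    ∀ j : ℕ, 0 < j → j < k → (π ^ j) a ∉ J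

/-- The size of an orbit of a permutation. -/
noncomputable def orbitSize {α : Type*} (σ : Equiv.Perm α) (c : Quotient (orbitSetoid σ)) : ℕ :=
  Nat.card {x : α // Quotient.mk (orbitSetoid σ) x = c}

/-- `∏_{U ∈ Π(σ)} (−1)^{|U|−1} C_{|U|−1}`. -/
noncomputable def catProd {α : Type*} (σ : Equiv.Perm α) : ℤ :=
  ∏ᶠ c : Quotient (orbitSetoid σ),
    ((-1 : ℤ) ^ (orbitSize σ c - 1) * (catalan (orbitSize σ c - 1) : ℤ))

/-- The carrier of the poset `S_nc-sd(p,q)`: pairs (permutation, hatted?). -/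
def NCSDSet (p q : ℕ) : Set (Equiv.Perm (Fin (p + q)) × Bool) :=
  {z | (z.2 = false ∧ (z.1 ∈ SDiscNC p q ∪ SAnnNC p q)) ∨ (z.2 = true ∧ z.1 ∈ SDiscNC p q)}

/-- The partial order of `S_nc-sd(p,q)`. -/
def ncsdLe (p q : ℕ) (a b : Equiv.Perm (Fin (p + q)) × Bool) : Prop :=
  (a.2 = false ∧ b.2 = false ∧ permLe a.1 b.1) ∨
  (b.2 = true ∧ permLe (b.1⁻¹ * tauPQ p q) (a.1⁻¹ * tauPQ p q))

end AnnNC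


namespace AnnNC

instance quotFintype (σ : Equiv.Perm (Fin (1 + 2))) : Fintype (Quotient (orbitSetoid σ)) :=
  @Quotient.fintype _ _ (orbitSetoid σ) (fun x y => inferInstanceAs (Decidable (σ.SameCycle x y)))

lemma numOrbits_eq' (σ : Equiv.Perm (Fin (1 + 2))) :
    numOrbits σ = Fintype.card (Quotient (orbitSetoid σ)) := Nat.card_eq_fintype_card

lemma relL (π ρ : Equiv.Perm (Fin (1 + 2))) {x y : Fin (1 + 2)} (h : π.SameCycle x y) :
    (orbitSetoid π ⊔ orbitSetoid ρ) x y := Setoid.le_def.mp le_sup_left h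

lemma relR (π ρ : Equiv.Perm (Fin (1 + 2))) {x y : Fin (1 + 2)} (h : ρ.SameCycle x y) :
    (orbitSetoid π ⊔ orbitSetoid ρ) x y := Setoid.le_def.mp le_sup_right h

lemma numJoin_eq_one (π ρ : Equiv.Perm (Fin (1 + 2)))
    (h01 : (orbitSetoid π ⊔ orbitSetoid ρ) 0 1)
    (h12 : (orbitSetoid π ⊔ orbitSetoid ρ) 1 2) : numJoin π ρ = 1 := by
  set s := orbitSetoid π ⊔ orbitSetoid ρ with hs
  have h02 : s 0 2 := s.trans' h01 h12
  have hall : ∀ x y : Fin (1 + 2), s x y := by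
    intro x y
    fin_cases x <;> fin_cases y <;>
      first
        | exact s.refl' _
        | exact h01 | exact h12 | exact h02
        | exact s.symm' h01 | exact s.symm' h12 | exact s.symm' h02
  have hsub : Subsingleton (Quotient s) :=
    ⟨fun a b => Quotient.inductionOn₂ a b fun x y => Quotient.sound (hall x y)⟩
  exact Nat.card_eq_one_iff_unique.mpr ⟨hsub, ⟨Quotient.mk s 0⟩⟩

lemma all_cyc' : ∀ x y : Fin (1 + 2), (Equiv.swap 0 1 * Equiv.swap 1 2 : Equiv.Perm (Fin (1+2))).SameCycle x y ∧ ((Equiv.swap 0 1 * Equiv.swap 1 2 : Equiv.Perm (Fin (1+2)))⁻¹).SameCycle x y := by decide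

/-- the 3-cycle (0 1 2) -/
private abbrev cyc : Equiv.Perm (Fin (1 + 2)) := Equiv.swap 0 1 * Equiv.swap 1 2

lemma nc_s01_tau : IsNoncrossingOn (Equiv.swap 0 1) (tauPQ 1 2) := by
  unfold IsNoncrossingOn euler
  rw [numJoin_eq_one _ _ (relL _ _ (by decide)) (relR _ _ (by decide))]
  simp only [numOrbits_eq', Nat.card_eq_fintype_card]
  decide

lemma nc_s02_tau : IsNoncrossingOn (Equiv.swap 0 2) (tauPQ 1 2) := by
  unfold IsNoncrossingOn euler
  have h12 : (orbitSetoid (Equiv.swap (0 : Fin (1+2)) 2) ⊔ orbitSetoid (tauPQ 1 2)) 1 2 :=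
    relR _ _ (by decide)
  have h01 : (orbitSetoid (Equiv.swap (0 : Fin (1+2)) 2) ⊔ orbitSetoid (tauPQ 1 2)) 0 1 :=
    Setoid.trans' _ (relL _ _ (by decide)) (Setoid.symm' _ h12)
  rw [numJoin_eq_one _ _ h01 h12]
  simp only [numOrbits_eq', Nat.card_eq_fintype_card]
  decide

lemma nc_c_tau : IsNoncrossingOn cyc (tauPQ 1 2) := by
  unfold IsNoncrossingOn euler
  rw [numJoin_eq_one _ _ (relL _ _ (by decide)) (relL _ _ (by decide))]
  simp only [numOrbits_eq', Nat.card_eq_fintype_card]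
  decide

lemma nc_ci_tau : IsNoncrossingOn cyc⁻¹ (tauPQ 1 2) := by
  unfold IsNoncrossingOn euler
  rw [numJoin_eq_one _ _ (relL _ _ (by decide)) (relL _ _ (by decide))]
  simp only [numOrbits_eq', Nat.card_eq_fintype_card]
  decide

lemma nc_s01_c : IsNoncrossingOn (Equiv.swap 0 1) cyc := by
  unfold IsNoncrossingOn euler
  rw [numJoin_eq_one _ _ (relR _ _ (by decide)) (relR _ _ (by decide))]
  simp only [numOrbits_eq', Nat.card_eq_fintype_card]
  decide

lemma nc_s02_c : IsNoncrossingOn (Equiv.swap 0 2) cyc := by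
  unfold IsNoncrossingOn euler
  rw [numJoin_eq_one _ _ (relR _ _ (by decide)) (relR _ _ (by decide))]
  simp only [numOrbits_eq', Nat.card_eq_fintype_card]
  decide

lemma nc_s01_ci : IsNoncrossingOn (Equiv.swap 0 1) cyc⁻¹ := by
  unfold IsNoncrossingOn euler
  rw [numJoin_eq_one _ _ (relR _ _ (by decide)) (relR _ _ (by decide))]
  simp only [numOrbits_eq', Nat.card_eq_fintype_card]
  decide

lemma nc_s02_ci : IsNoncrossingOn (Equiv.swap 0 2) cyc⁻¹ := by
  unfold IsNoncrossingOn euler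
  rw [numJoin_eq_one _ _ (relR _ _ (by decide)) (relR _ _ (by decide))]
  simp only [numOrbits_eq', Nat.card_eq_fintype_card]
  decide

lemma not_nc_ci_c : ¬ IsNoncrossingOn cyc⁻¹ cyc := by
  intro h
  unfold IsNoncrossingOn euler at h
  rw [numJoin_eq_one _ _ (relR _ _ (by decide)) (relR _ _ (by decide))] at h
  simp only [numOrbits_eq', Nat.card_eq_fintype_card] at h
  exact absurd h (by decide)

lemma not_nc_c_ci : ¬ IsNoncrossingOn cyc cyc⁻¹ := by
  intro h
  unfold IsNoncrossingOn euler at h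
  rw [numJoin_eq_one _ _ (relL _ _ (by decide)) (relL _ _ (by decide))] at h
  simp only [numOrbits_eq', Nat.card_eq_fintype_card] at h
  exact absurd h (by decide)

lemma classify : ∀ σ : Equiv.Perm (Fin (1 + 2)), σ.SameCycle 0 1 → σ.SameCycle 0 2 →
    σ = cyc ∨ σ = cyc⁻¹ := by decide

lemma mem1 : Equiv.swap (0 : Fin (1 + 2)) 1 ∈ SAnnNC 1 2 :=
  ⟨nc_s01_tau, 0, 1, by decide, by decide, by decide⟩

lemma mem2 : Equiv.swap (0 : Fin (1 + 2)) 2 ∈ SAnnNC 1 2 :=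
  ⟨nc_s02_tau, 0, 2, by decide, by decide, by decide⟩

lemma mem3 : cyc ∈ SAnnNC 1 2 :=
  ⟨nc_c_tau, 0, 1, by decide, by decide, by decide⟩

lemma mem4 : cyc⁻¹ ∈ SAnnNC 1 2 :=
  ⟨nc_ci_tau, 0, 1, by decide, by decide, by decide⟩

lemma le13 : ncsdLe 1 2 (Equiv.swap 0 1, false) (cyc, false) :=
  Or.inl ⟨rfl, rfl, fun x y _ => (all_cyc' _ _).1, nc_s01_c⟩

lemma le14 : ncsdLe 1 2 (Equiv.swap 0 1, false) (cyc⁻¹, false) :=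
  Or.inl ⟨rfl, rfl, fun x y _ => (all_cyc' _ _).2, nc_s01_ci⟩

lemma le23 : ncsdLe 1 2 (Equiv.swap 0 2, false) (cyc, false) :=
  Or.inl ⟨rfl, rfl, fun x y _ => (all_cyc' _ _).1, nc_s02_c⟩

lemma le24 : ncsdLe 1 2 (Equiv.swap 0 2, false) (cyc⁻¹, false) :=
  Or.inl ⟨rfl, rfl, fun x y _ => (all_cyc' _ _).2, nc_s02_ci⟩

end AnnNC

open AnnNC in
/-- `S_nc-sd(1,2)` is not a lattice.  The annular elements `(1,2)(3)` and
`(1,3)(2)` are each below the annular elements `(1,2,3)` and `(1,3,2)`, which are distinct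
minimal upper bounds, and the pair has no least upper bound. -/
theorem stmt10 :
    (Equiv.swap (0 : Fin (1 + 2)) 1 ∈ SAnnNC 1 2) ∧
    (Equiv.swap (0 : Fin (1 + 2)) 2 ∈ SAnnNC 1 2) ∧
    ((Equiv.swap (0 : Fin (1 + 2)) 1 * Equiv.swap (1 : Fin (1 + 2)) 2) ∈ SAnnNC 1 2) ∧
    ((Equiv.swap (0 : Fin (1 + 2)) 1 * Equiv.swap (1 : Fin (1 + 2)) 2)⁻¹ ∈ SAnnNC 1 2) ∧
    (Equiv.swap (0 : Fin (1 + 2)) 1 * Equiv.swap (1 : Fin (1 + 2)) 2) ≠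
      (Equiv.swap (0 : Fin (1 + 2)) 1 * Equiv.swap (1 : Fin (1 + 2)) 2)⁻¹ ∧
    ncsdLe 1 2 (Equiv.swap 0 1, false)
      (Equiv.swap (0 : Fin (1 + 2)) 1 * Equiv.swap 1 2, false) ∧
    ncsdLe 1 2 (Equiv.swap 0 1, false)
      ((Equiv.swap (0 : Fin (1 + 2)) 1 * Equiv.swap 1 2)⁻¹, false) ∧
    ncsdLe 1 2 (Equiv.swap 0 2, false)
      (Equiv.swap (0 : Fin (1 + 2)) 1 * Equiv.swap 1 2, false) ∧
    ncsdLe 1 2 (Equiv.swap 0 2, false)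
      ((Equiv.swap (0 : Fin (1 + 2)) 1 * Equiv.swap 1 2)⁻¹, false) ∧
    (∀ t ∈ NCSDSet 1 2, ncsdLe 1 2 (Equiv.swap 0 1, false) t →
        ncsdLe 1 2 (Equiv.swap 0 2, false) t →
        ncsdLe 1 2 t (Equiv.swap (0 : Fin (1 + 2)) 1 * Equiv.swap 1 2, false) →
        t = (Equiv.swap (0 : Fin (1 + 2)) 1 * Equiv.swap 1 2, false)) ∧
    (∀ t ∈ NCSDSet 1 2, ncsdLe 1 2 (Equiv.swap 0 1, false) t →
        ncsdLe 1 2 (Equiv.swap 0 2, false) t →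
        ncsdLe 1 2 t ((Equiv.swap (0 : Fin (1 + 2)) 1 * Equiv.swap 1 2)⁻¹, false) →
        t = ((Equiv.swap (0 : Fin (1 + 2)) 1 * Equiv.swap 1 2)⁻¹, false)) ∧
    ¬ ∃ s ∈ NCSDSet 1 2, ncsdLe 1 2 (Equiv.swap 0 1, false) s ∧
        ncsdLe 1 2 (Equiv.swap 0 2, false) s ∧
        ∀ t ∈ NCSDSet 1 2, ncsdLe 1 2 (Equiv.swap 0 1, false) t →
          ncsdLe 1 2 (Equiv.swap 0 2, false) t → ncsdLe 1 2 s t := by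
  refine ⟨mem1, mem2, mem3, mem4, by decide, le13, le14, le23, le24, ?_, ?_, ?_⟩
  · intro t _ h1 h2 h3
    rcases h3 with ⟨ht2, -, hle⟩ | ⟨hb, -⟩
    · rcases h1 with ⟨-, -, hle1⟩ | ⟨hb1, -⟩
      · rcases h2 with ⟨-, -, hle2⟩ | ⟨hb2, -⟩
        · have hc1 : t.1.SameCycle 0 1 := hle1.1 0 1 (by decide)
          have hc2 : t.1.SameCycle 0 2 := hle2.1 0 2 (by decide)
          rcases classify t.1 hc1 hc2 with h | h
          · exact Prod.ext h ht2
          · rw [h] at hle; exact absurd hle.2 not_nc_ci_c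
        · rw [ht2] at hb2; simp at hb2
      · rw [ht2] at hb1; simp at hb1
    · simp at hb
  · intro t _ h1 h2 h3
    rcases h3 with ⟨ht2, -, hle⟩ | ⟨hb, -⟩
    · rcases h1 with ⟨-, -, hle1⟩ | ⟨hb1, -⟩
      · rcases h2 with ⟨-, -, hle2⟩ | ⟨hb2, -⟩
        · have hc1 : t.1.SameCycle 0 1 := hle1.1 0 1 (by decide)
          have hc2 : t.1.SameCycle 0 2 := hle2.1 0 2 (by decide)
          rcases classify t.1 hc1 hc2 with h | h
          · rw [h] at hle; exact absurd hle.2 not_nc_c_ci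
          · exact Prod.ext h ht2
        · rw [ht2] at hb2; simp at hb2
      · rw [ht2] at hb1; simp at hb1
    · simp at hb
  · rintro ⟨s, _, hub1, hub2, hleast⟩
    have m3 : ((cyc, false) : Equiv.Perm (Fin (1 + 2)) × Bool) ∈ NCSDSet 1 2 :=
      Or.inl ⟨rfl, Or.inr mem3⟩
    have m4 : ((cyc⁻¹, false) : Equiv.Perm (Fin (1 + 2)) × Bool) ∈ NCSDSet 1 2 :=
      Or.inl ⟨rfl, Or.inr mem4⟩
    have l3 := hleast _ m3 le13 le23
    have l4 := hleast _ m4 le14 le24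
    rcases l3 with ⟨hs2, -, hlec⟩ | ⟨hb, -⟩
    · rcases l4 with ⟨-, -, hleci⟩ | ⟨hb, -⟩
      · rcases hub1 with ⟨-, -, hle1⟩ | ⟨hb1, -⟩
        · rcases hub2 with ⟨-, -, hle2⟩ | ⟨hb2, -⟩
          · have hc1 : s.1.SameCycle 0 1 := hle1.1 0 1 (by decide)
            have hc2 : s.1.SameCycle 0 2 := hle2.1 0 2 (by decide)
            rcases classify s.1 hc1 hc2 with h | h
            · rw [h] at hleci; exact absurd hleci.2 not_nc_c_ci
            · rw [h] at hlec; exact absurd hlec.2 not_nc_ci_c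
          · rw [hs2] at hb2; simp at hb2
        · rw [hs2] at hb1; simp at hb1
      · simp at hb
    · simp at hb
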